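/- (Differential privacy of the exponential mechanism.) Let H be a finite nonempty set, let s be a score function assigning to each dataset D and each h ∈ H a real number, with sensitivity Δs = max over h ∈ H of the supremum over adjacent pairs D, D' of |s(D,h) − s(D',h)|, assumed finite and positive, and let ε > 0. The exponential mechanism M_exp, which on input D outputs each h ∈ H with probability exp(ε·s(D,h)/(2Δs)) / ∑_{h'∈H} exp(ε·s(D,h')/(2Δs)), is (ε,0)-differentially private. -/

import Mathlib

open MeasureTheory ENNReal

/-- Two datasets (finite multisets over a universe `U`) are adjacent under the
add/remove notion if their symmetric difference has cardinality 1. -/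
def Adjacent {U : Type*} [DecidableEq U] (D D' : Multiset U) : Prop :=
  Multiset.card ((D - D') + (D' - D)) = 1

/-- The probability that the exponential mechanism with score function `s`,
sensitivity `Δs` and privacy parameter `ε` outputs `h` on input dataset `D`:
`exp(ε·s(D,h)/(2Δs)) / ∑_{h'} exp(ε·s(D,h')/(2Δs))`. -/
noncomputable def expMechProb {U H : Type*} [Fintype H]
    (s : Multiset U → H → ℝ) (Δs ε : ℝ) (D : Multiset U) (h : H) : ℝ :=
  Real.exp (ε * s D h / (2 * Δs)) / ∑ h' : H, Real.exp (ε * s D h' / (2 * Δs))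

/-- **Differential privacy of the exponential mechanism.** If `H` is a finite
nonempty set and the score function `s` has sensitivity at most `Δs > 0`
(i.e. `|s(D,h) − s(D',h)| ≤ Δs` for every `h` and every adjacent pair `D ∼ D'`),
then for every event `S ⊆ H` and every adjacent pair of datasets
`P[M_exp(D) ∈ S] ≤ e^ε · P[M_exp(D') ∈ S]`. -/
theorem exponential_mechanism_dp {U H : Type*} [DecidableEq U] [Fintype H] [Nonempty H]
    (s : Multiset U → H → ℝ) (Δs ε : ℝ) (hΔ : 0 < Δs) (hε : 0 < ε)
    (hsens : ∀ (h : H) (D D' : Multiset U), Adjacent D D' → |s D h - s D' h| ≤ Δs) :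
    ∀ (S : Finset H) (D D' : Multiset U), Adjacent D D' →
      ∑ h ∈ S, expMechProb s Δs ε D h ≤
        Real.exp ε * ∑ h ∈ S, expMechProb s Δs ε D' h := by
  intro S D D' hadj
  rw [Finset.mul_sum]
  apply Finset.sum_le_sum
  intro h _
  unfold expMechProb
  have hT : (0:ℝ) < ∑ h' : H, Real.exp (ε * s D h' / (2 * Δs)) :=
    Finset.sum_pos (fun i _ => Real.exp_pos _) Finset.univ_nonempty
  have hT' : (0:ℝ) < ∑ h' : H, Real.exp (ε * s D' h' / (2 * Δs)) :=
    Finset.sum_pos (fun i _ => Real.exp_pos _) Finset.univ_nonempty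
  -- numerator bound: exp(ε s D g /(2Δs)) ≤ exp(ε/2) * exp(ε s D' g /(2Δs)), both directions
  have key : ∀ g : H, Real.exp (ε * s D g / (2 * Δs)) ≤
      Real.exp (ε/2) * Real.exp (ε * s D' g / (2 * Δs)) := by
    intro g
    rw [← Real.exp_add]
    apply Real.exp_le_exp.mpr
    have h1 : s D g - s D' g ≤ Δs := (abs_le.mp (hsens g D D' hadj)).2
    have h2 : ε * s D g ≤ ε * Δs + ε * s D' g := by nlinarith
    calc ε * s D g / (2 * Δs) ≤ (ε * Δs + ε * s D' g) / (2 * Δs) := by gcongr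
      _ = ε / 2 + ε * s D' g / (2 * Δs) := by field_simp
  have key' : ∀ g : H, Real.exp (ε * s D' g / (2 * Δs)) ≤
      Real.exp (ε/2) * Real.exp (ε * s D g / (2 * Δs)) := by
    intro g
    rw [← Real.exp_add]
    apply Real.exp_le_exp.mpr
    have h1 : -Δs ≤ s D g - s D' g := (abs_le.mp (hsens g D D' hadj)).1
    have h2 : ε * s D' g ≤ ε * Δs + ε * s D g := by nlinarith
    calc ε * s D' g / (2 * Δs) ≤ (ε * Δs + ε * s D g) / (2 * Δs) := by gcongr
      _ = ε / 2 + ε * s D g / (2 * Δs) := by field_simp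
  rw [div_le_iff₀ hT, mul_comm (Real.exp ε), mul_assoc, div_mul_eq_mul_div,
    le_div_iff₀ hT']
  calc Real.exp (ε * s D h / (2 * Δs)) * ∑ h' : H, Real.exp (ε * s D' h' / (2 * Δs))
      ≤ (Real.exp (ε/2) * Real.exp (ε * s D' h / (2 * Δs))) *
        (Real.exp (ε/2) * ∑ h' : H, Real.exp (ε * s D h' / (2 * Δs))) := by
        apply mul_le_mul (key h) ?_ hT'.le (by positivity)
        rw [Finset.mul_sum]
        exact Finset.sum_le_sum fun g _ => key' g
    _ = (Real.exp (ε/2) * Real.exp (ε/2)) * Real.exp (ε * s D' h / (2 * Δs)) *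
        ∑ h' : H, Real.exp (ε * s D h' / (2 * Δs)) := by ring
    _ = Real.exp (ε * s D' h / (2 * Δs)) *
        (Real.exp ε * ∑ h' : H, Real.exp (ε * s D h' / (2 * Δs))) := by
        rw [← Real.exp_add, (by ring : ε/2 + ε/2 = ε)]; ring
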